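/- Let a = (a_0, a_t, a_1, a_∞) ∈ ℂ⁴, and let (i,j,k) be a permutation of (0,t,1). Define the half-monodromy map g_{ij}: ℂ³ → ℂ³ whose image Y satisfies Y_i = X_j, Y_j = X_i − F_{X_i}(X;a), Y_k = X_k, and let a' be the parameter obtained from a by swapping a_i and a_j (with a_k and a_∞ unchanged). Then F(g_{ij}(X); a') = F(X; a) for all X ∈ ℂ³. -/
import Mathlib


noncomputable section

/-- The Fricke polynomial `F(X; a)` of the Painlevé VI character variety, where
the indices `0, 1, 2` of `Fin 3` stand for the labels `0, t, 1`, and `aI = a_∞`. -/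
def Fr (X a : Fin 3 → ℂ) (aI : ℂ) : ℂ :=
  X 0 * X 1 * X 2 + X 0 ^ 2 + X 1 ^ 2 + X 2 ^ 2
    - (a 0 * aI + a 1 * a 2) * X 0 - (a 1 * aI + a 2 * a 0) * X 1 - (a 2 * aI + a 0 * a 1) * X 2
    + (a 0 * a 1 * a 2 * aI + a 0 ^ 2 + a 1 ^ 2 + a 2 ^ 2 + aI ^ 2 - 4)

/-- The partial derivative `F_{X_i} = X_j X_k + 2 X_i - θ_i` of the Fricke polynomial,
for `(i,j,k)` a permutation of the three indices. -/
def FrD (X a : Fin 3 → ℂ) (aI : ℂ) (i j k : Fin 3) : ℂ :=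
  X j * X k + 2 * X i - (a i * aI + a j * a k)

lemma Fr_perm (X a : Fin 3 → ℂ) (aI : ℂ) (i j k : Fin 3)
    (hij : i ≠ j) (hik : i ≠ k) (hjk : j ≠ k) :
    Fr X a aI =
      X i * X j * X k + X i ^ 2 + X j ^ 2 + X k ^ 2
        - (a i * aI + a j * a k) * X i - (a j * aI + a k * a i) * X j
        - (a k * aI + a i * a j) * X k
        + (a i * a j * a k * aI + a i ^ 2 + a j ^ 2 + a k ^ 2 + aI ^ 2 - 4) := by
  fin_cases i <;> fin_cases j <;> fin_cases k <;> simp_all [Fr] <;> ring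

/-- **The half-monodromy map `g_{ij}` preserves the Fricke polynomial**, up to swapping
the parameters `a_i ↔ a_j`: with `(i,j,k) = (σ 0, σ 1, σ 2)` a permutation of the labels
`(0,t,1)`, if `Y_i = X_j`, `Y_j = X_i − F_{X_i}(X;a)`, `Y_k = X_k` and `a'` is `a` with
`a_i, a_j` swapped, then `F(Y; a') = F(X; a)`. -/
theorem half_monodromy_preserves_fricke
    (a : Fin 3 → ℂ) (aI : ℂ) (σ : Equiv.Perm (Fin 3)) (X Y a' : Fin 3 → ℂ)
    (hYi : Y (σ 0) = X (σ 1))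
    (hYj : Y (σ 1) = X (σ 0) - FrD X a aI (σ 0) (σ 1) (σ 2))
    (hYk : Y (σ 2) = X (σ 2))
    (hai : a' (σ 0) = a (σ 1)) (haj : a' (σ 1) = a (σ 0)) (hak : a' (σ 2) = a (σ 2)) :
    Fr Y a' aI = Fr X a aI := by
  have hij : σ 0 ≠ σ 1 := σ.injective.ne (by decide)
  have hik : σ 0 ≠ σ 2 := σ.injective.ne (by decide)
  have hjk : σ 1 ≠ σ 2 := σ.injective.ne (by decide)
  rw [Fr_perm Y a' aI (σ 0) (σ 1) (σ 2) hij hik hjk,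
      Fr_perm X a aI (σ 0) (σ 1) (σ 2) hij hik hjk,
      hYi, hYj, hYk, hai, haj, hak]
  simp only [FrD]
  ring
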